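/- For all natural numbers n and m: if m > n or m ≢ n (mod 2), then a(n,m) = 0; and if m ≤ n and m ≡ n (mod 2), then a(n,m) = C(n, (n−m)/2) − C(n, (n−m)/2 − 1), where C(n,k) denotes the binomial coefficient and C(n,−1) is interpreted as 0 (equivalently, a(n,m) + C(n, (n−m)/2 − 1) = C(n, (n−m)/2)). -/
import Mathlib


open Filter Real

/-- `aa n m` = number of length-`n` paths on `ℤ≥0` with steps `±1` starting at `0`
and ending at `m`. -/
def aa : ℕ → ℕ → ℕ
  | 0, m => if m = 0 then 1 else 0
  | n+1, m => aa n (m+1) + (if m = 0 then 0 else aa n (m-1))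

/-- `aSum n = Σ_{m=0}^n aa n m`. -/
def aSum (n : ℕ) : ℕ := ∑ m ∈ Finset.range (n+1), aa n m

/-- The modular variant `b(n,m)` depending on `ℓ`:
`b(n,m) = a(n,m)` if `m ≡ ℓ-1 (mod ℓ)`; otherwise `b(0,m) = δ_{m,0}`, and for `n ≥ 1`,
`b(n,m) = b(n-1,m-1) + b(n-1,m+1)` if `m % ℓ < ℓ-2` (negative-index terms are `0`),
and `b(n,m) = b(n-1,m-1)` if `m ≡ ℓ-2 (mod ℓ)`. -/
def bb (ℓ : ℕ) : ℕ → ℕ → ℕ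
  | 0, m => if m % ℓ = ℓ - 1 then aa 0 m else if m = 0 then 1 else 0
  | n+1, m =>
    if m % ℓ = ℓ - 1 then aa (n+1) m
    else if m % ℓ = ℓ - 2 then (if m = 0 then 0 else bb ℓ n (m-1))
    else (if m = 0 then 0 else bb ℓ n (m-1)) + bb ℓ n (m+1)

/-- `bSum ℓ n = Σ_{m=0}^n bb ℓ n m`. -/
def bSum (ℓ : ℕ) (n : ℕ) : ℕ := ∑ m ∈ Finset.range (n+1), bb ℓ n m

/-- `cc ℓ n r = Σ_{m ≥ 0, m ≡ r (mod ℓ)} aa n m` (finite since `aa n m = 0` for `m > n`). -/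
def cc (ℓ : ℕ) (n r : ℕ) : ℕ :=
  ∑ m ∈ Finset.range (n+1), if m % ℓ = r then aa n m else 0

/-- `ww ℓ n = Σ_{0 ≤ m ≤ n, m ≡ ℓ-1 (mod ℓ)} bb ℓ n m`. -/
def ww (ℓ : ℕ) (n : ℕ) : ℕ :=
  ∑ m ∈ Finset.range (n+1), if m % ℓ = ℓ - 1 then bb ℓ n m else 0

/-- Ballot-type formula: `a(n,m) = 0` when `m > n` or `m ≢ n (mod 2)`; and for
`m ≤ n` with `m ≡ n (mod 2)`, `a(n,m) = C(n,(n−m)/2) − C(n,(n−m)/2−1)` where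
`C(n,−1) := 0`. -/
def FF (n k : ℕ) : ℤ := (n.choose k : ℤ) - if k = 0 then 0 else (n.choose (k-1) : ℤ)

lemma FF_pascal (n k : ℕ) : FF (n+1) (k+1) = FF n (k+1) + FF n k := by
  unfold FF
  cases k with
  | zero => simp [Nat.choose_one_right]
  | succ j => simp [Nat.choose_succ_succ]; ring

lemma FF_central (n k : ℕ) (h : n = 2*k+1) : FF (n+1) (k+1) = FF n k := by
  have hs : n.choose (k+1) = n.choose k := by
    have := Nat.choose_symm (n := n) (k := k+1) (by omega)
    rw [show n - (k+1) = k by omega] at this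
    omega
  rw [FF_pascal]
  unfold FF
  rw [if_neg (Nat.succ_ne_zero k), show k+1-1 = k from rfl, hs]
  ring

lemma main : ∀ n m : ℕ,
    ((n < m ∨ m % 2 ≠ n % 2) → aa n m = 0) ∧
    (m ≤ n → m % 2 = n % 2 → (aa n m : ℤ) = FF n ((n-m)/2)) := by
  intro n
  induction n with
  | zero =>
    intro m
    constructor
    · intro h
      have : m ≠ 0 := by omega
      simp [aa, this]
    · intro h1 _
      have : m = 0 := by omega
      subst this
      simp [aa, FF]
  | succ n ih =>
    intro m
    have eq1 : aa (n+1) m = aa n (m+1) + (if m = 0 then 0 else aa n (m-1)) := rfl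
    constructor
    · intro h
      rw [eq1]
      rcases Nat.eq_zero_or_pos m with rfl | hm
      · have h1 := (ih 1).1 (by omega)
        simp [h1]
      · rw [if_neg (by omega), (ih (m+1)).1 (by omega), (ih (m-1)).1 (by omega)]
    · intro h1 h2
      obtain ⟨k, hk⟩ : ∃ k, n+1-m = 2*k := ⟨(n+1-m)/2, by omega⟩
      have hk2 : (n+1-m)/2 = k := by omega
      rw [eq1, hk2]
      rcases Nat.eq_zero_or_pos m with rfl | hm
      · -- m = 0, n = 2(k-1)+1
        have hkk : 1 ≤ k := by omega
        have ihf : (aa n 1 : ℤ) = FF n ((n-1)/2) := (ih 1).2 (by omega) (by omega)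
        rw [show (n-1)/2 = k-1 by omega] at ihf
        have hc : FF (n+1) k = FF n (k-1) := by
          have := FF_central n (k-1) (by omega)
          rwa [show k-1+1 = k by omega] at this
        norm_num
        rw [ihf, hc]
      · rw [if_neg (by omega)]
        rcases Nat.eq_zero_or_pos k with rfl | hk1
        · -- m = n+1
          have hz : aa n (m+1) = 0 := (ih (m+1)).1 (by omega)
          have ihf : (aa n (m-1) : ℤ) = FF n ((n-(m-1))/2) := (ih (m-1)).2 (by omega) (by omega)
          rw [show (n-(m-1))/2 = 0 by omega] at ihf
          rw [hz]
          push_cast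
          rw [ihf]
          simp [FF]
        · -- 1 ≤ k, so m+1 ≤ n
          have ihf1 : (aa n (m+1) : ℤ) = FF n ((n-(m+1))/2) := (ih (m+1)).2 (by omega) (by omega)
          have ihf2 : (aa n (m-1) : ℤ) = FF n ((n-(m-1))/2) := (ih (m-1)).2 (by omega) (by omega)
          rw [show (n-(m+1))/2 = k-1 by omega] at ihf1
          rw [show (n-(m-1))/2 = k by omega] at ihf2
          push_cast
          rw [ihf1, ihf2]
          have := FF_pascal n (k-1)
          rw [show k-1+1 = k by omega] at this
          rw [this]
          ring

theorem stmt10 : ∀ n m : ℕ,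
    ((n < m ∨ m % 2 ≠ n % 2) → aa n m = 0) ∧
    (m ≤ n → m % 2 = n % 2 →
      (aa n m : ℤ) = (n.choose ((n - m) / 2) : ℤ) -
        (if (n - m) / 2 = 0 then 0 else (n.choose ((n - m) / 2 - 1) : ℤ))) := by
  intro n m
  exact ⟨(main n m).1, fun h1 h2 => (main n m).2 h1 h2⟩
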